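/- Let ε > 0, let C be a nonempty finite index set of cells, and for each c ∈ C let a_c, b_c ≥ 0 be reals and let (Z₁^c, Z₂^c)_{c ∈ C} be a family of mutually independent Laplace(0, 1/ε) random variables on a probability space. Then E[ Σ_{c ∈ C} ( b_c·1{a_c + Z₁^c ≥ b_c + Z₂^c} + a_c·1{a_c + Z₁^c < b_c + Z₂^c} ) ] = Σ_{c ∈ C} [ min(a_c, b_c)·(1 − g_ε(x_c)) + max(a_c, b_c)·g_ε(x_c) ], where x_c = |a_c − b_c| and g_ε(x) = (exp(−ε·x)/2)·(1 + ε·x/2). -/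

import Mathlib

open MeasureTheory Real ProbabilityTheory Set

noncomputable def lapF (ε : ℝ) : ℝ → ℝ := fun z => ε / 2 * Real.exp (-ε * |z|)
noncomputable def lapμ (ε : ℝ) : Measure ℝ :=
  volume.withDensity fun z => ENNReal.ofReal (lapF ε z)
noncomputable def cdfL (ε s : ℝ) : ℝ :=
  if s ≤ 0 then Real.exp (ε*s)/2 else 1 - Real.exp (-(ε*s))/2

lemma expInt_Ioi {k : ℝ} (hk : 0 < k) (c : ℝ) :
    ∫ x in Ioi c, Real.exp (-(k*x)) = Real.exp (-(k*c))/k := by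
  have := integral_comp_mul_left_Ioi (fun y => Real.exp (-y)) c hk
  simp only [smul_eq_mul] at this
  rw [this, integral_exp_neg_Ioi, inv_mul_eq_div]

lemma expInt_Ioi_integrable {k : ℝ} (hk : 0 < k) (c : ℝ) :
    IntegrableOn (fun x => Real.exp (-(k*x))) (Ioi c) := by
  simpa [neg_mul] using exp_neg_integrableOn_Ioi c hk

lemma expInt_Iic {k : ℝ} (hk : 0 < k) (c : ℝ) :
    ∫ x in Iic c, Real.exp (k*x) = Real.exp (k*c)/k := by
  have := integral_comp_neg_Iic c (fun x => Real.exp (-(k*x)))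
  simp only [mul_neg, neg_neg] at this
  rw [this, expInt_Ioi hk]
  simp [mul_comm]

lemma integrableOn_comp_neg_Iic {g : ℝ → ℝ} (c : ℝ) (h : IntegrableOn g (Ioi (-c))) :
    IntegrableOn (fun x => g (-x)) (Iic c) := by
  have A : MeasurableEmbedding fun x : ℝ => -x :=
    (Homeomorph.neg ℝ).isClosedEmbedding.measurableEmbedding
  have hIci : IntegrableOn g (Ici (-c)) := by
    rwa [integrableOn_Ici_iff_integrableOn_Ioi]
  have hmap : (volume.restrict (Iic c)).map (fun x : ℝ => -x) = volume.restrict (Ici (-c)) := by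
    have := Measure.restrict_map (μ := (volume : Measure ℝ)) A.measurable
      (s := Ici (-c)) measurableSet_Ici
    rw [Measure.map_neg_eq_self] at this
    rw [this]
    congr 1
    ext x; simp
  have h2 : Integrable g ((volume.restrict (Iic c)).map (fun x : ℝ => -x)) := by
    rw [hmap]; exact hIci
  exact A.integrable_map_iff.mp h2

lemma expInt_Iic_integrable {k : ℝ} (hk : 0 < k) (c : ℝ) :
    IntegrableOn (fun x => Real.exp (k*x)) (Iic c) := by
  have := integrableOn_comp_neg_Iic (g := fun x => Real.exp (-(k*x))) c
    (expInt_Ioi_integrable hk (-c))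
  simpa [mul_neg, neg_neg] using this

lemma lapF_nonneg {ε : ℝ} (hε : 0 < ε) (z : ℝ) : 0 ≤ lapF ε z := by
  unfold lapF; positivity

lemma lapF_cont (ε : ℝ) : Continuous (lapF ε) := by
  unfold lapF; fun_prop

lemma lapF_integrable {ε : ℝ} (hε : 0 < ε) : Integrable (lapF ε) := by
  rw [← integrableOn_univ, ← Set.Iic_union_Ioi (a := (0:ℝ))]
  apply IntegrableOn.union
  · apply IntegrableOn.congr_fun ((expInt_Iic_integrable hε 0).const_mul (ε/2))
      _ measurableSet_Iic
    intro x hx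
    simp only [lapF, abs_of_nonpos (mem_Iic.mp hx)]
    ring_nf
  · apply IntegrableOn.congr_fun ((expInt_Ioi_integrable hε 0).const_mul (ε/2))
      _ measurableSet_Ioi
    intro x hx
    simp only [lapF, abs_of_pos (mem_Ioi.mp hx)]
    ring_nf

lemma lapF_int_Iic {ε : ℝ} (hε : 0 < ε) (s : ℝ) :
    ∫ x in Iic s, lapF ε x = cdfL ε s := by
  have key : ∀ c : ℝ, c ≤ 0 → ∫ x in Iic c, lapF ε x = Real.exp (ε*c)/2 := by
    intro c hc
    rw [setIntegral_congr_fun measurableSet_Iic (g := fun x => ε/2 * Real.exp (ε * x))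
      (fun x hx => by simp only [lapF, abs_of_nonpos (le_trans (mem_Iic.mp hx) hc)]; ring_nf)]
    rw [integral_const_mul, expInt_Iic hε]
    field_simp
  rcases le_or_gt s 0 with hs | hs
  · rw [cdfL, if_pos hs, key s hs]
  · rw [cdfL, if_neg (not_le.mpr hs)]
    have hsplit : Iic s = Iic 0 ∪ Ioc 0 s := by
      rw [Iic_union_Ioc_eq_Iic hs.le]
    rw [hsplit, setIntegral_union ((Set.Iic_disjoint_Ioi le_rfl).mono_right Ioc_subset_Ioi_self)
      measurableSet_Ioc ((lapF_integrable hε).integrableOn) ((lapF_integrable hε).integrableOn)]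
    have h1 := key 0 le_rfl
    have h2 : ∫ x in Ioc (0:ℝ) s, lapF ε x = 1/2 - Real.exp (-(ε*s))/2 := by
      rw [setIntegral_congr_fun measurableSet_Ioc (g := fun x => ε/2 * Real.exp (-(ε * x)))
        (fun x hx => by simp only [lapF, abs_of_pos (mem_Ioc.mp hx).1]; ring_nf)]
      rw [← intervalIntegral.integral_of_le hs.le, intervalIntegral.integral_const_mul]
      have : ∫ x in (0:ℝ)..s, Real.exp (-(ε * x)) = (1 - Real.exp (-(ε*s)))/ε := by
        have h := intervalIntegral.integral_comp_mul_left (f := fun y => Real.exp y)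
          (a := 0) (b := s) (c := -ε) (by linarith)
        simp only [neg_mul, smul_eq_mul] at h ⊢
        rw [h, integral_exp, mul_zero, neg_zero, Real.exp_zero]
        ring
      rw [this]
      field_simp
    rw [h1, h2]; simp at h1 ⊢; ring

lemma cdfL_measurable (ε : ℝ) : Measurable (cdfL ε) := by
  unfold cdfL
  exact Measurable.ite (measurableSet_Iic (a := (0:ℝ))) (by fun_prop) (by fun_prop)

lemma cdfL_nonneg {ε : ℝ} (hε : 0 < ε) (s : ℝ) : 0 ≤ cdfL ε s := by
  unfold cdfL
  split_ifs with h
  · positivity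
  · have : Real.exp (-(ε*s)) ≤ 1 := by
      rw [Real.exp_le_one_iff]
      nlinarith [not_le.mp h]
    linarith

lemma cdfL_le_one {ε : ℝ} (hε : 0 < ε) (s : ℝ) : cdfL ε s ≤ 1 := by
  unfold cdfL
  split_ifs with h
  · have : Real.exp (ε*s) ≤ 1 := by
      rw [Real.exp_le_one_iff]
      nlinarith
    linarith
  · have := Real.exp_pos (-(ε*s))
    linarith

lemma lapμ_Iic {ε : ℝ} (hε : 0 < ε) (s : ℝ) :
    lapμ ε (Iic s) = ENNReal.ofReal (cdfL ε s) := by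
  rw [lapμ, withDensity_apply _ measurableSet_Iic,
    ← ofReal_integral_eq_lintegral_ofReal ((lapF_integrable hε).integrableOn)
      (ae_of_all _ (lapF_nonneg hε)), lapF_int_Iic hε]

lemma lapμ_prob {ε : ℝ} (hε : 0 < ε) : IsProbabilityMeasure (lapμ ε) := by
  constructor
  rw [lapμ, withDensity_apply _ MeasurableSet.univ, Measure.restrict_univ,
    ← ofReal_integral_eq_lintegral_ofReal (lapF_integrable hε) (ae_of_all _ (lapF_nonneg hε))]
  have hsplit := integral_add_compl (measurableSet_Iic (a := (0:ℝ))) (lapF_integrable hε)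
  have h1 : ∫ x in Iic (0:ℝ), lapF ε x = 1/2 := by
    rw [lapF_int_Iic hε, cdfL, if_pos le_rfl]
    simp
  have h2 : ∫ x in (Iic (0:ℝ))ᶜ, lapF ε x = 1/2 := by
    rw [compl_Iic]
    rw [setIntegral_congr_fun measurableSet_Ioi (g := fun x => ε/2 * Real.exp (-(ε * x)))
      (fun x hx => by simp only [lapF, abs_of_pos (mem_Ioi.mp hx)]; ring_nf)]
    rw [integral_const_mul, expInt_Ioi hε]
    simp
    field_simp
  rw [h1, h2] at hsplit
  norm_num at hsplit
  rw [← hsplit]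
  simp

lemma prodFun_integrable {ε : ℝ} (hε : 0 < ε) (t : ℝ) :
    Integrable (fun x => cdfL ε (x - t) * lapF ε x) := by
  have hmeas : Measurable (fun x => cdfL ε (x - t) * lapF ε x) :=
    ((cdfL_measurable ε).comp (measurable_id.sub_const t)).mul (lapF_cont ε).measurable
  refine (lapF_integrable hε).mono hmeas.aestronglyMeasurable (ae_of_all _ fun x => ?_)
  rw [Real.norm_eq_abs, Real.norm_eq_abs, abs_mul,
    abs_of_nonneg (cdfL_nonneg hε _), abs_of_nonneg (lapF_nonneg hε _)]
  nlinarith [cdfL_le_one hε (x - t), cdfL_nonneg hε (x-t), lapF_nonneg hε x]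

lemma lap_prod_ge {ε : ℝ} (hε : 0 < ε) {t : ℝ} (ht : 0 ≤ t) :
    ((lapμ ε).prod (lapμ ε)) {p : ℝ × ℝ | t ≤ p.1 - p.2} =
      ENNReal.ofReal (Real.exp (-(ε*t))/2 * (1 + ε*t/2)) := by
  have hS : MeasurableSet {p : ℝ × ℝ | t ≤ p.1 - p.2} :=
    measurableSet_le measurable_const (measurable_fst.sub measurable_snd)
  have hprob := lapμ_prob hε
  rw [Measure.prod_apply hS]
  have hsec : ∀ x : ℝ, (Prod.mk x ⁻¹' {p : ℝ × ℝ | t ≤ p.1 - p.2}) = Iic (x - t) := by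
    intro x; ext y
    simp only [mem_preimage, mem_setOf_eq, mem_Iic]
    constructor <;> intro h <;> linarith
  simp_rw [hsec, lapμ_Iic hε]
  conv_lhs => rw [lapμ]
  have hg : Measurable fun x : ℝ => ENNReal.ofReal (cdfL ε (x - t)) :=
    ((cdfL_measurable ε).comp (measurable_id.sub_const t)).ennreal_ofReal
  have hf : Measurable fun z : ℝ => ENNReal.ofReal (lapF ε z) :=
    (lapF_cont ε).measurable.ennreal_ofReal
  rw [lintegral_withDensity_eq_lintegral_mul _ hf hg]
  have hpt : ∀ x : ℝ,
      (ENNReal.ofReal (lapF ε x)) * ENNReal.ofReal (cdfL ε (x - t))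
        = ENNReal.ofReal (cdfL ε (x - t) * lapF ε x) := by
    intro x
    rw [← ENNReal.ofReal_mul (lapF_nonneg hε x), mul_comm]
  calc ∫⁻ x, (fun z => ENNReal.ofReal (lapF ε z)) x * ENNReal.ofReal (cdfL ε (x - t)) ∂volume
      = ∫⁻ x, ENNReal.ofReal (cdfL ε (x - t) * lapF ε x) ∂volume := by
        exact lintegral_congr fun x => hpt x
    _ = ENNReal.ofReal (∫ x, cdfL ε (x - t) * lapF ε x) := by
        rw [← ofReal_integral_eq_lintegral_ofReal (prodFun_integrable hε t)
          (ae_of_all _ fun x => mul_nonneg (cdfL_nonneg hε _) (lapF_nonneg hε _))]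
    _ = ENNReal.ofReal (Real.exp (-(ε*t))/2 * (1 + ε*t/2)) := by
        congr 1
        have hint := prodFun_integrable hε t
        have hsplit := integral_add_compl (measurableSet_Iic (a := (0:ℝ))) hint
        rw [← hsplit, compl_Iic, ← Ioc_union_Ioi_eq_Ioi ht,
          setIntegral_union (Ioc_disjoint_Ioi le_rfl) measurableSet_Ioi
            hint.integrableOn hint.integrableOn]
        have J1 : ∫ x in Iic (0:ℝ), cdfL ε (x - t) * lapF ε x = Real.exp (-(ε*t))/8 := by
          rw [setIntegral_congr_fun measurableSet_Iic
            (g := fun x => (ε/4 * Real.exp (-(ε*t))) * Real.exp ((2*ε)*x))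
            (fun x hx => by
              have hx0 : x ≤ 0 := mem_Iic.mp hx
              simp only [lapF, cdfL, if_pos (by linarith : x - t ≤ 0), abs_of_nonpos hx0]
              have h1 : Real.exp (ε*(x-t)) * Real.exp (-ε * -x) = Real.exp (-(ε*t) + (2*ε)*x) := by
                rw [← Real.exp_add]; ring_nf
              calc Real.exp (ε*(x-t))/2 * (ε / 2 * Real.exp (-ε * -x))
                  = ε/4 * (Real.exp (ε*(x-t)) * Real.exp (-ε * -x)) := by ring
                _ = ε/4 * Real.exp (-(ε*t) + (2*ε)*x) := by rw [h1]
                _ = (ε/4 * Real.exp (-(ε*t))) * Real.exp ((2*ε)*x) := by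
                    rw [Real.exp_add]; ring)]
          rw [integral_const_mul, expInt_Iic (by linarith : (0:ℝ) < 2*ε)]
          rw [mul_zero, Real.exp_zero]
          field_simp
          ring
        have J2 : ∫ x in Ioc (0:ℝ) t, cdfL ε (x - t) * lapF ε x
            = ε/4 * Real.exp (-(ε*t)) * t := by
          rw [setIntegral_congr_fun measurableSet_Ioc
            (g := fun _ => ε/4 * Real.exp (-(ε*t)))
            (fun x hx => by
              obtain ⟨hx0, hxt⟩ := mem_Ioc.mp hx
              simp only [lapF, cdfL, if_pos (by linarith : x - t ≤ 0), abs_of_pos hx0]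
              have h1 : Real.exp (ε*(x-t)) * Real.exp (-ε * x) = Real.exp (-(ε*t)) := by
                rw [← Real.exp_add]; ring_nf
              calc Real.exp (ε*(x-t))/2 * (ε / 2 * Real.exp (-ε * x))
                  = ε/4 * (Real.exp (ε*(x-t)) * Real.exp (-ε * x)) := by ring
                _ = ε/4 * Real.exp (-(ε*t)) := by rw [h1])]
          rw [setIntegral_const, measureReal_def, Real.volume_Ioc, sub_zero, ENNReal.toReal_ofReal ht,
            smul_eq_mul]
          ring
        have J3 : ∫ x in Ioi t, cdfL ε (x - t) * lapF ε x
            = Real.exp (-(ε*t))/2 - Real.exp (-(ε*t))/8 := by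
          rw [setIntegral_congr_fun measurableSet_Ioi
            (g := fun x => ε/2 * Real.exp (-(ε*x)) - (ε/4 * Real.exp (ε*t)) * Real.exp (-((2*ε)*x)))
            (fun x hx => by
              have hxt : t < x := mem_Ioi.mp hx
              simp only [lapF, cdfL, if_neg (by push_neg; linarith : ¬ (x - t ≤ 0)),
                abs_of_pos (by linarith : (0:ℝ) < x)]
              have h1 : Real.exp (-(ε*(x-t))) * Real.exp (-ε*x)
                  = Real.exp (ε*t) * Real.exp (-((2*ε)*x)) := by
                rw [← Real.exp_add, ← Real.exp_add]; ring_nf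
              calc (1 - Real.exp (-(ε*(x-t)))/2) * (ε / 2 * Real.exp (-ε * x))
                  = ε/2 * Real.exp (-(ε*x)) - ε/4 * (Real.exp (-(ε*(x-t))) * Real.exp (-ε*x)) := by
                    ring_nf
                _ = ε/2 * Real.exp (-(ε*x)) - (ε/4 * Real.exp (ε*t)) * Real.exp (-((2*ε)*x)) := by
                    rw [h1]; ring)]
          rw [integral_sub ((expInt_Ioi_integrable hε t).const_mul _)
            ((expInt_Ioi_integrable (by linarith : (0:ℝ) < 2*ε) t).const_mul _),
            integral_const_mul, integral_const_mul, expInt_Ioi hε, expInt_Ioi (by linarith : (0:ℝ) < 2*ε)]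
          have h2 : Real.exp (ε*t) * Real.exp (-(2*ε*t)) = Real.exp (-(ε*t)) := by
            rw [← Real.exp_add]; ring_nf
          have hne : ε ≠ 0 := ne_of_gt hε
          field_simp
          rw [show ε * 2 * t = 2 * ε * t by ring]
          linear_combination (-8) * h2
        rw [J1, J2, J3]
        ring

noncomputable def lapG (ε t : ℝ) : ℝ :=
  if 0 ≤ t then Real.exp (-(ε*t))/2 * (1+ε*t/2)
  else 1 - Real.exp (-(ε*(-t)))/2 * (1+ε*(-t)/2)

lemma gval_nonneg {ε : ℝ} (hε : 0 < ε) {t : ℝ} (ht : 0 ≤ t) :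
    0 ≤ Real.exp (-(ε*t))/2 * (1+ε*t/2) := by positivity

lemma gval_le_one {ε : ℝ} (hε : 0 < ε) {t : ℝ} (ht : 0 ≤ t) :
    Real.exp (-(ε*t))/2 * (1+ε*t/2) ≤ 1 := by
  have h1 : 1 + ε*t/2 ≤ Real.exp (ε*t/2) := by
    have := Real.add_one_le_exp (ε*t/2)
    linarith
  have h2 : Real.exp (-(ε*t)) * Real.exp (ε*t/2) = Real.exp (-(ε*t/2)) := by
    rw [← Real.exp_add]; ring_nf
  have h3 : Real.exp (-(ε*t/2)) ≤ 1 := by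
    rw [Real.exp_le_one_iff]; nlinarith
  nlinarith [Real.exp_pos (-(ε*t)), Real.exp_pos (ε*t/2)]

lemma lapG_nonneg {ε : ℝ} (hε : 0 < ε) (t : ℝ) : 0 ≤ lapG ε t := by
  unfold lapG; split_ifs with h
  · exact gval_nonneg hε h
  · have := gval_le_one hε (t := -t) (by linarith [not_le.mp h])
    linarith

lemma lapG_le_one {ε : ℝ} (hε : 0 < ε) (t : ℝ) : lapG ε t ≤ 1 := by
  unfold lapG; split_ifs with h
  · exact gval_le_one hε h
  · have := gval_nonneg hε (t := -t) (by linarith [not_le.mp h])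
    linarith

lemma lap_prod_line {ε : ℝ} (hε : 0 < ε) (s : ℝ) :
    ((lapμ ε).prod (lapμ ε)) {p : ℝ × ℝ | p.1 - p.2 = s} = 0 := by
  have hS : MeasurableSet {p : ℝ × ℝ | p.1 - p.2 = s} :=
    measurableSet_eq_fun (measurable_fst.sub measurable_snd) measurable_const
  haveI := lapμ_prob hε
  rw [Measure.prod_apply hS]
  have hsec : ∀ x : ℝ, (Prod.mk x ⁻¹' {p : ℝ × ℝ | p.1 - p.2 = s}) = {x - s} := by
    intro x; ext y
    simp only [mem_preimage, mem_setOf_eq, mem_singleton_iff]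
    constructor <;> intro h <;> linarith
  simp_rw [hsec]
  have hz : ∀ x : ℝ, lapμ ε {x - s} = 0 := fun x =>
    (withDensity_absolutelyContinuous volume _) (measure_singleton _)
  simp [hz]

lemma lap_prod_ge_all {ε : ℝ} (hε : 0 < ε) (t : ℝ) :
    ((lapμ ε).prod (lapμ ε)) {p : ℝ × ℝ | t ≤ p.1 - p.2} = ENNReal.ofReal (lapG ε t) := by
  haveI := lapμ_prob hε
  rcases le_or_gt 0 t with ht | ht
  · rw [lap_prod_ge hε ht, lapG, if_pos ht]
  · rw [lapG, if_neg (not_le.mpr ht)]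
    have hS : ∀ u : ℝ, MeasurableSet {p : ℝ × ℝ | u ≤ p.1 - p.2} := fun u =>
      measurableSet_le measurable_const (measurable_fst.sub measurable_snd)
    -- swap symmetry
    have hswap : ((lapμ ε).prod (lapμ ε)) {p : ℝ × ℝ | t ≤ p.1 - p.2}
        = ((lapμ ε).prod (lapμ ε)) {p : ℝ × ℝ | p.1 - p.2 ≤ -t} := by
      conv_lhs => rw [← Measure.prod_swap]
      rw [Measure.map_apply measurable_swap (hS t)]
      congr 1
      ext p
      simp only [mem_preimage, Prod.swap, mem_setOf_eq]
      constructor <;> intro h <;> linarith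
    rw [hswap]
    have hcompl : {p : ℝ × ℝ | p.1 - p.2 ≤ -t} = {p : ℝ × ℝ | -t < p.1 - p.2}ᶜ := by
      ext p; simp [not_lt]
    have hlt : ((lapμ ε).prod (lapμ ε)) {p : ℝ × ℝ | -t < p.1 - p.2}
        = ENNReal.ofReal (Real.exp (-(ε*(-t)))/2 * (1+ε*(-t)/2)) := by
      have hdecomp : {p : ℝ × ℝ | -t ≤ p.1 - p.2}
          = {p : ℝ × ℝ | -t < p.1 - p.2} ∪ {p : ℝ × ℝ | p.1 - p.2 = -t} := by
        ext p; simp only [mem_setOf_eq, mem_union]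
        constructor
        · intro h; rcases lt_or_eq_of_le h with h | h
          · exact Or.inl h
          · exact Or.inr h.symm
        · rintro (h | h) <;> linarith
      have hd := lap_prod_ge hε (le_of_lt (neg_pos.mpr ht))
      rw [hdecomp] at hd
      rw [← hd]
      refine le_antisymm (measure_mono subset_union_left) ?_
      calc ((lapμ ε).prod (lapμ ε)) ({p : ℝ × ℝ | -t < p.1 - p.2} ∪ {p | p.1 - p.2 = -t})
          ≤ ((lapμ ε).prod (lapμ ε)) {p : ℝ × ℝ | -t < p.1 - p.2}
            + ((lapμ ε).prod (lapμ ε)) {p : ℝ × ℝ | p.1 - p.2 = -t} := measure_union_le _ _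
        _ = ((lapμ ε).prod (lapμ ε)) {p : ℝ × ℝ | -t < p.1 - p.2} := by
            rw [lap_prod_line hε (-t), add_zero]
    have hSlt : MeasurableSet {p : ℝ × ℝ | -t < p.1 - p.2} :=
      measurableSet_lt measurable_const (measurable_fst.sub measurable_snd)
    rw [hcompl, prob_compl_eq_one_sub hSlt, hlt,
      ENNReal.ofReal_sub _ (gval_nonneg hε (le_of_lt (neg_pos.mpr ht))), ENNReal.ofReal_one]


/-- Expected total misclassification count of the noisy histogram classifier over a
nonempty finite set of cells `C`, where cell `c` has `a c` positive and `b c` negative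
instances, and `Z (c, 0)`, `Z (c, 1)` are the mutually independent Laplace(0, 1/ε)
noises added to the positive and negative counts of cell `c`. -/
theorem expected_grid_misclassification {Ω : Type*} [MeasurableSpace Ω]
    (P : Measure Ω) [IsProbabilityMeasure P]
    (ε : ℝ) (hε : 0 < ε)
    {C : Type*} [Fintype C] [Nonempty C]
    (a b : C → ℝ) (ha : ∀ c, 0 ≤ a c) (hb : ∀ c, 0 ≤ b c)
    (Z : C × Fin 2 → Ω → ℝ)
    (hZ : ∀ p, Measurable (Z p))
    (hindep : iIndepFun Z P)
    (hlaw : ∀ p, Measure.map (Z p) P =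
      volume.withDensity (fun z => ENNReal.ofReal (ε / 2 * Real.exp (-ε * |z|)))) :
    ∫ ω, (∑ c : C,
        (b c * (if a c + Z (c, 0) ω ≥ b c + Z (c, 1) ω then (1 : ℝ) else 0)
          + a c * (if a c + Z (c, 0) ω < b c + Z (c, 1) ω then (1 : ℝ) else 0))) ∂P =
      ∑ c : C,
        (min (a c) (b c) *
            (1 - Real.exp (-ε * |a c - b c|) / 2 * (1 + ε * |a c - b c| / 2))
          + max (a c) (b c) *
            (Real.exp (-ε * |a c - b c|) / 2 * (1 + ε * |a c - b c| / 2))) := by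
  classical
  have hμ : ∀ p : C × Fin 2, Measure.map (Z p) P = lapμ ε := fun p => hlaw p
  set A : C → Set Ω := fun c => {ω | b c + Z (c,1) ω ≤ a c + Z (c,0) ω} with hA_def
  have hAmeas : ∀ c, MeasurableSet (A c) := fun c =>
    measurableSet_le (measurable_const.add (hZ (c,1))) (measurable_const.add (hZ (c,0)))
  have hPA : ∀ c, P (A c) = ENNReal.ofReal (lapG ε (b c - a c)) := by
    intro c
    have hpair : Measurable fun ω => (Z (c,0) ω, Z (c,1) ω) := (hZ _).prodMk (hZ _)
    have hne : ((c,0) : C × Fin 2) ≠ (c,1) := by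
      simp [Prod.ext_iff]
    have hIndep : IndepFun (Z (c,0)) (Z (c,1)) P := hindep.indepFun hne
    have hmap : P.map (fun ω => (Z (c,0) ω, Z (c,1) ω)) = (lapμ ε).prod (lapμ ε) := by
      rw [(indepFun_iff_map_prod_eq_prod_map_map (hZ _).aemeasurable (hZ _).aemeasurable).mp
        hIndep, hμ, hμ]
    have hSm : MeasurableSet {p : ℝ × ℝ | b c - a c ≤ p.1 - p.2} :=
      measurableSet_le measurable_const (measurable_fst.sub measurable_snd)
    have hset : A c = (fun ω => (Z (c,0) ω, Z (c,1) ω)) ⁻¹' {p : ℝ × ℝ | b c - a c ≤ p.1 - p.2} := by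
      ext ω
      simp only [hA_def, mem_setOf_eq, mem_preimage]
      constructor <;> intro h <;> linarith
    rw [hset, ← Measure.map_apply hpair hSm, hmap, lap_prod_ge_all hε]
  have hind : ∀ c, (fun ω => if a c + Z (c,0) ω ≥ b c + Z (c,1) ω then (1:ℝ) else 0)
      = (A c).indicator (fun _ => (1:ℝ)) := by
    intro c; funext ω
    by_cases h : b c + Z (c,1) ω ≤ a c + Z (c,0) ω
    · simp [h, hA_def, Set.indicator_apply]
    · simp [h, hA_def, Set.indicator_apply, ge_iff_le]
  have hind' : ∀ c, (fun ω => if a c + Z (c,0) ω < b c + Z (c,1) ω then (1:ℝ) else 0)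
      = ((A c)ᶜ).indicator (fun _ => (1:ℝ)) := by
    intro c; funext ω
    by_cases h : a c + Z (c,0) ω < b c + Z (c,1) ω
    · simp [h, hA_def, Set.indicator_apply, not_le.mpr h]
    · simp [h, hA_def, Set.indicator_apply, not_lt.mp h]
  have hintc : ∀ c : C, Integrable (fun ω =>
      b c * (if a c + Z (c, 0) ω ≥ b c + Z (c, 1) ω then (1 : ℝ) else 0)
        + a c * (if a c + Z (c, 0) ω < b c + Z (c, 1) ω then (1 : ℝ) else 0)) P := by
    intro c
    apply Integrable.add
    · simp_rw [show ∀ ω, (if a c + Z (c, 0) ω ≥ b c + Z (c, 1) ω then (1:ℝ) else 0)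
        = (A c).indicator (fun _ => (1:ℝ)) ω from fun ω => congrFun (hind c) ω]
      exact (((integrable_const (1:ℝ)).indicator (hAmeas c)).const_mul _)
    · simp_rw [show ∀ ω, (if a c + Z (c, 0) ω < b c + Z (c, 1) ω then (1:ℝ) else 0)
        = ((A c)ᶜ).indicator (fun _ => (1:ℝ)) ω from fun ω => congrFun (hind' c) ω]
      exact (((integrable_const (1:ℝ)).indicator (hAmeas c).compl).const_mul _)
  rw [integral_finset_sum _ (fun c _ => hintc c)]
  refine Finset.sum_congr rfl fun c _ => ?_
  have e1 : ∫ ω, (b c * (if a c + Z (c, 0) ω ≥ b c + Z (c, 1) ω then (1 : ℝ) else 0)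
      + a c * (if a c + Z (c, 0) ω < b c + Z (c, 1) ω then (1 : ℝ) else 0)) ∂P
      = b c * (P (A c)).toReal + a c * (P ((A c)ᶜ)).toReal := by
    rw [integral_add
      ((by rw [hind c]; exact ((integrable_const (1:ℝ)).indicator (hAmeas c))
        : Integrable (fun ω => if a c + Z (c, 0) ω ≥ b c + Z (c, 1) ω then (1:ℝ) else 0) P).const_mul _)
      ((by rw [hind' c]; exact ((integrable_const (1:ℝ)).indicator (hAmeas c).compl)
        : Integrable (fun ω => if a c + Z (c, 0) ω < b c + Z (c, 1) ω then (1:ℝ) else 0) P).const_mul _),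
      integral_const_mul, integral_const_mul, hind c, hind' c,
      integral_indicator_const _ (hAmeas c), integral_indicator_const _ (hAmeas c).compl]
    simp [measureReal_def]
  rw [e1]
  have hg0 : (0:ℝ) ≤ lapG ε (b c - a c) := lapG_nonneg hε _
  have hg1 : lapG ε (b c - a c) ≤ 1 := lapG_le_one hε _
  have e2 : (P (A c)).toReal = lapG ε (b c - a c) := by
    rw [hPA c, ENNReal.toReal_ofReal hg0]
  have e3 : (P ((A c)ᶜ)).toReal = 1 - lapG ε (b c - a c) := by
    rw [prob_compl_eq_one_sub (hAmeas c), hPA c, ← ENNReal.ofReal_one,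
      ← ENNReal.ofReal_sub _ hg0, ENNReal.toReal_ofReal (by linarith)]
  rw [e2, e3]
  rcases le_total (a c) (b c) with hab | hab
  · have habs : |a c - b c| = b c - a c := by
      rw [abs_of_nonpos (by linarith)]; ring
    rw [habs, min_eq_left hab, max_eq_right hab, lapG, if_pos (by linarith : (0:ℝ) ≤ b c - a c)]
    ring_nf
  · have habs : |a c - b c| = a c - b c := abs_of_nonneg (by linarith)
    have hcase : lapG ε (b c - a c)
        = 1 - Real.exp (-(ε*(a c - b c)))/2 * (1+ε*(a c - b c)/2) := by
      rcases eq_or_lt_of_le hab with heq | hlt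
      · rw [lapG, if_pos (by linarith : (0:ℝ) ≤ b c - a c)]
        have : b c - a c = 0 := by rw [heq]; ring
        rw [this]
        have : a c - b c = 0 := by rw [heq]; ring
        rw [this]
        norm_num
      · rw [lapG, if_neg (by push_neg; linarith : ¬ (0:ℝ) ≤ b c - a c)]
        ring_nf
    rw [habs, min_eq_right hab, max_eq_left hab, hcase]
    ring_nf
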